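/- Let b ≥ 2 and ρ ≥ 1 be integers, and let Λ = (b-1, b-1, ..., b-1) with ρ entries. Then the number of Λ-restricted ρ-colored b-ary partitions of n equals the binomial coefficient C(n+ρ-1, ρ-1) for every n ≥ 0; in particular this number is independent of the base b. -/

import Mathlib

/-- The number of `Λ`-restricted `ρ`-colored `b`-ary partitions of `n`:
representations are counting functions `c` of finite support, where `c (j, r)`
is the number of parts `b ^ j` carrying color `r`, subject to `c (j, r) ≤ Λ r`,
and the total sum of all parts is `n`. -/
noncomputable def coloredCount (b ρ : ℕ) (Λ : Fin ρ → ℕ) (n : ℕ) : ℕ :=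
  Nat.card {c : ℕ × Fin ρ →₀ ℕ //
    (∀ j r, c (j, r) ≤ Λ r) ∧ (c.sum fun p m => m * b ^ p.1) = n}

namespace ColoredCountAux

/-- The value of a digit function. -/
def val (b : ℕ) (d : ℕ →₀ ℕ) : ℕ := d.sum fun j m => m * b ^ j

lemma val_zero (b : ℕ) : val b 0 = 0 := Finsupp.sum_zero_index

lemma val_add (b : ℕ) (x y : ℕ →₀ ℕ) : val b (x + y) = val b x + val b y :=
  Finsupp.sum_add_index' (fun _ => by simp) (fun _ _ _ => add_mul _ _ _)

lemma val_single (b j m : ℕ) : val b (Finsupp.single j m) = m * b ^ j :=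
  Finsupp.sum_single_index (by simp)

def succEmb : ℕ ↪ ℕ := ⟨Nat.succ, Nat.succ_injective⟩

lemma val_embDomain (b : ℕ) (t : ℕ →₀ ℕ) :
    val b (Finsupp.embDomain succEmb t) = b * val b t := by
  rw [val, Finsupp.sum_embDomain]
  rw [val, Finsupp.mul_sum]
  refine Finsupp.sum_congr fun j hj => ?_
  show t j * b ^ (j + 1) = b * (t j * b ^ j)
  ring

/-- The tail (shift) of a digit function. -/
noncomputable def tail (d : ℕ →₀ ℕ) : ℕ →₀ ℕ :=
  Finsupp.comapDomain Nat.succ d (Nat.succ_injective.injOn)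

lemma tail_apply (d : ℕ →₀ ℕ) (j : ℕ) : tail d j = d (j + 1) := rfl

lemma decomp (d : ℕ →₀ ℕ) :
    d = Finsupp.single 0 (d 0) + Finsupp.embDomain succEmb (tail d) := by
  ext j
  cases j with
  | zero =>
    have h0 : (0 : ℕ) ∉ Set.range succEmb := by
      rintro ⟨k, hk⟩; exact Nat.succ_ne_zero k hk
    simp [Finsupp.embDomain_notin_range _ _ _ h0]
  | succ k =>
    have : Finsupp.embDomain succEmb (tail d) (succEmb k) = tail d k :=
      Finsupp.embDomain_apply_self _ _ _
    simp only [Finsupp.add_apply, Finsupp.single_apply]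
    rw [if_neg (Nat.succ_ne_zero k).symm, zero_add]
    exact ((Finsupp.embDomain_apply_self succEmb (tail d) k).trans (tail_apply d k)).symm

lemma val_eq (b : ℕ) (d : ℕ →₀ ℕ) : val b d = d 0 + b * val b (tail d) := by
  conv_lhs => rw [decomp d]
  rw [val_add, val_single, val_embDomain]
  simp

lemma val_eq_zero {b : ℕ} (hb : 2 ≤ b) {d : ℕ →₀ ℕ} (h : val b d = 0) : d = 0 := by
  ext j
  by_contra hj
  have hmem : j ∈ d.support := Finsupp.mem_support_iff.mpr hj
  have h2 : d j * b ^ j = 0 := (Finset.sum_eq_zero_iff).mp h j hmem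
  have hb' : 0 < b ^ j := Nat.pow_pos (by omega)
  rcases Nat.mul_eq_zero.mp h2 with h3 | h3
  · exact hj h3
  · omega

lemma val_injOn {b : ℕ} (hb : 2 ≤ b) : ∀ n : ℕ, ∀ d d' : ℕ →₀ ℕ,
    (∀ j, d j ≤ b - 1) → (∀ j, d' j ≤ b - 1) → val b d = n → val b d' = n → d = d' := by
  intro n
  induction n using Nat.strong_induction_on with
  | _ n ih =>
    intro d d' hd hd' hv hv'
    rcases Nat.eq_zero_or_pos n with rfl | hn
    · rw [val_eq_zero hb hv, val_eq_zero hb hv']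
    · have key : ∀ e : ℕ →₀ ℕ, (∀ j, e j ≤ b - 1) → val b e = n →
          e 0 = n % b ∧ val b (tail e) = n / b := by
        intro e he hve
        have h1 : e 0 + b * val b (tail e) = n := by rw [← val_eq]; exact hve
        have h2 : e 0 < b := by have := he 0; omega
        constructor
        · rw [← h1, Nat.add_mul_mod_self_left, Nat.mod_eq_of_lt h2]
        · have h3 : (e 0 + b * val b (tail e)) / b = val b (tail e) := by
            rw [Nat.add_mul_div_left _ _ (show 0 < b by omega),
              Nat.div_eq_of_lt h2, zero_add]
          rw [← h1, h3]
      obtain ⟨hd0, hdt⟩ := key d hd hv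
      obtain ⟨hd0', hdt'⟩ := key d' hd' hv'
      have hlt : n / b < n := Nat.div_lt_self hn (by omega)
      have htail : tail d = tail d' :=
        ih (n / b) hlt (tail d) (tail d') (fun j => hd (j + 1)) (fun j => hd' (j + 1)) hdt hdt'
      rw [decomp d, decomp d', htail, hd0, hd0']

lemma val_surj {b : ℕ} (hb : 2 ≤ b) : ∀ n : ℕ, ∃ d : ℕ →₀ ℕ,
    (∀ j, d j ≤ b - 1) ∧ val b d = n := by
  intro n
  induction n using Nat.strong_induction_on with
  | _ n ih =>
    rcases Nat.eq_zero_or_pos n with rfl | hn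
    · exact ⟨0, fun j => by simp, val_zero b⟩
    · obtain ⟨t, ht, hvt⟩ := ih (n / b) (Nat.div_lt_self hn (by omega))
      refine ⟨Finsupp.single 0 (n % b) + Finsupp.embDomain succEmb t, ?_, ?_⟩
      · intro j
        cases j with
        | zero =>
          have h0 : (0 : ℕ) ∉ Set.range succEmb := by
            rintro ⟨k, hk⟩; exact Nat.succ_ne_zero k hk
          have hmod : n % b < b := Nat.mod_lt n (by omega)
          simp [Finsupp.embDomain_notin_range _ _ _ h0]
          omega
        | succ k =>
          have hemb : Finsupp.embDomain succEmb t (succEmb k) = t k :=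
            Finsupp.embDomain_apply_self _ _ _
          simp only [Finsupp.add_apply, Finsupp.single_apply]
          rw [if_neg (Nat.succ_ne_zero k).symm, zero_add]
          exact hemb.trans_le (ht k)
      · rw [val_add, val_single, val_embDomain, hvt]
        simp [Nat.mod_add_div]

/-- Bounded digit functions are in bijection with ℕ. -/
noncomputable def digitEquiv {b : ℕ} (hb : 2 ≤ b) :
    {d : ℕ →₀ ℕ // ∀ j, d j ≤ b - 1} ≃ ℕ :=
  Equiv.ofBijective (fun d => val b d.1)
    ⟨fun d d' h => Subtype.ext (val_injOn hb _ d.1 d'.1 d.2 d'.2 h rfl),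
     fun n => by obtain ⟨d, h1, h2⟩ := val_surj hb n; exact ⟨⟨d, h1⟩, h2⟩⟩

lemma digitEquiv_apply {b : ℕ} (hb : 2 ≤ b) (d : {d : ℕ →₀ ℕ // ∀ j, d j ≤ b - 1}) :
    digitEquiv hb d = val b d.1 := rfl

/-- Currying a colored counting function into a family of digit functions. -/
noncomputable def curryEquiv (ρ : ℕ) : (ℕ × Fin ρ →₀ ℕ) ≃ (Fin ρ → (ℕ →₀ ℕ)) :=
  ((Finsupp.domCongr (M := ℕ) (Equiv.prodComm ℕ (Fin ρ))).toEquiv.trans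
    Finsupp.finsuppProdEquiv).trans Finsupp.equivFunOnFinite

lemma curryEquiv_apply (ρ : ℕ) (c : ℕ × Fin ρ →₀ ℕ) (r : Fin ρ) (j : ℕ) :
    curryEquiv ρ c r j = c (j, r) := by
  simp [curryEquiv, Finsupp.finsuppProdEquiv, Finsupp.curry_apply, Finsupp.domCongr]

lemma curryEquiv_sum (b ρ : ℕ) (c : ℕ × Fin ρ →₀ ℕ) :
    (c.sum fun p m => m * b ^ p.1) = ∑ r, val b (curryEquiv ρ c r) := by
  have h1 : ∑ r, val b (curryEquiv ρ c r)
      = (Finsupp.curry (Finsupp.equivMapDomain (Equiv.prodComm ℕ (Fin ρ)) c)).sum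
          fun r d => d.sum fun j m => m * b ^ j := by
    rw [Finsupp.sum_fintype]
    · rfl
    · intro r; exact Finsupp.sum_zero_index
  rw [h1, Finsupp.sum_curry_index _ (fun r j m => m * b ^ j),
    Finsupp.sum_equivMapDomain]
  rfl

end ColoredCountAux

open ColoredCountAux in
/-- For `Λ = (b-1, …, b-1)` with `ρ` entries, the number of `Λ`-restricted
`ρ`-colored `b`-ary partitions of `n` is `C(n + ρ - 1, ρ - 1)`, independently of `b`. -/
theorem coloredCount_all_b_sub_one (b ρ : ℕ) (hb : 2 ≤ b) (hρ : 1 ≤ ρ) (n : ℕ) :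
    coloredCount b ρ (fun _ => b - 1) n = (n + ρ - 1).choose (ρ - 1) := by
  have e1 : {c : ℕ × Fin ρ →₀ ℕ //
      (∀ j r, c (j, r) ≤ b - 1) ∧ (c.sum fun p m => m * b ^ p.1) = n}
      ≃ {g : Fin ρ → (ℕ →₀ ℕ) // (∀ r j, g r j ≤ b - 1) ∧ ∑ r, val b (g r) = n} := by
    refine (Equiv.subtypeEquiv (curryEquiv ρ) fun c => ?_)
    constructor
    · rintro ⟨h1, h2⟩
      exact ⟨fun r j => by rw [curryEquiv_apply]; exact h1 j r,
        by rw [← curryEquiv_sum]; exact h2⟩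
    · rintro ⟨h1, h2⟩
      exact ⟨fun j r => by rw [← curryEquiv_apply (ρ := ρ)]; exact h1 r j,
        by rw [curryEquiv_sum b ρ]; exact h2⟩
  have e2 : {g : Fin ρ → (ℕ →₀ ℕ) // (∀ r j, g r j ≤ b - 1) ∧ ∑ r, val b (g r) = n}
      ≃ {h : Fin ρ → {d : ℕ →₀ ℕ // ∀ j, d j ≤ b - 1} // ∑ r, val b (h r).1 = n} :=
    { toFun := fun g => ⟨fun r => ⟨g.1 r, g.2.1 r⟩, g.2.2⟩
      invFun := fun h => ⟨fun r => (h.1 r).1, fun r j => (h.1 r).2 j, h.2⟩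
      left_inv := fun g => rfl
      right_inv := fun h => rfl }
  have e3 : {h : Fin ρ → {d : ℕ →₀ ℕ // ∀ j, d j ≤ b - 1} // ∑ r, val b (h r).1 = n}
      ≃ {f : Fin ρ → ℕ // ∑ r, f r = n} :=
    Equiv.subtypeEquiv (Equiv.piCongrRight fun _ => digitEquiv hb) (fun h => by
      simp [Equiv.piCongrRight, digitEquiv_apply hb])
  have e4 : {f : Fin ρ → ℕ // ∑ r, f r = n} ≃ Sym (Fin ρ) n :=
    (Sym.equivNatSumOfFintype (Fin ρ) n).symm
  have hcard : coloredCount b ρ (fun _ => b - 1) n = Fintype.card (Sym (Fin ρ) n) :=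
    Nat.card_eq_of_equiv_fin (((e1.trans e2).trans e3).trans (e4.trans (Fintype.equivFin _)))
  rw [hcard, Sym.card_sym_eq_choose, Fintype.card_fin]
  have h1 : ρ + n - 1 = n + ρ - 1 := by omega
  rw [h1]
  have h2 : n + ρ - 1 - n = ρ - 1 := by omega
  rw [← h2, Nat.choose_symm (by omega)]
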